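/- Let Q be a lower transition rate operator on a finite nonempty set 𝒳, and let (T_t)_{t≥0} be the associated family of operators determined by the differential equation d/dt T_t f = Q(T_t f) with T_0 f = f. Then lim_{Δ→0+} T_Δ = I and lim_{Δ→0+} (1/Δ)(T_Δ − I) = Q, both in operator norm; that is, sup{‖T_Δ f − f‖ : ‖f‖ = 1} → 0 and sup{‖(T_Δ f − f)/Δ − Q f‖ : ‖f‖ = 1} → 0 as Δ → 0 from the right. -/

import Mathlib

open Filter Topology

/-- The minimum of a real-valued function on a finite nonempty type. -/
noncomputable def minf {X : Type*} [Fintype X] [Nonempty X] (f : X → ℝ) : ℝ :=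
  Finset.univ.inf' Finset.univ_nonempty f

/-- The maximum of a real-valued function on a finite nonempty type. -/
noncomputable def maxf {X : Type*} [Fintype X] [Nonempty X] (f : X → ℝ) : ℝ :=
  Finset.univ.sup' Finset.univ_nonempty f

/-- The (real-valued) indicator function of a set. -/
noncomputable def ind {X : Type*} (A : Set X) : X → ℝ := A.indicator 1

/-- The conjugate (upper) operator `f ↦ -(Q (-f))`. -/
def conjOp {X : Type*} (Q : (X → ℝ) → (X → ℝ)) : (X → ℝ) → (X → ℝ) :=
  fun f => -(Q (-f))

/-- A lower transition rate operator. -/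
def IsLTRO {X : Type*} [Fintype X] (Q : (X → ℝ) → (X → ℝ)) : Prop :=
  (∀ μ : ℝ, Q (fun _ => μ) = 0) ∧
  (∀ f g : X → ℝ, Q f + Q g ≤ Q (f + g)) ∧
  (∀ l : ℝ, 0 ≤ l → ∀ f : X → ℝ, Q (l • f) = l • Q f) ∧
  (∀ x y : X, x ≠ y → 0 ≤ Q (ind {y}) x)

/-- A lower transition operator. -/
def IsLTO {X : Type*} [Fintype X] [Nonempty X] (T : (X → ℝ) → (X → ℝ)) : Prop :=
  (∀ f : X → ℝ, ∀ x : X, minf f ≤ T f x) ∧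
  (∀ f g : X → ℝ, T f + T g ≤ T (f + g)) ∧
  (∀ l : ℝ, 0 ≤ l → ∀ f : X → ℝ, T (l • f) = l • T f)

/-- `T` is the family of operators solving `d/dt T_t f = Q (T_t f)` on `[0,∞)`
with `T_0 f = f`. -/
def IsSol {X : Type*} [Fintype X] (Q : (X → ℝ) → (X → ℝ))
    (T : ℝ → (X → ℝ) → (X → ℝ)) : Prop :=
  (∀ f : X → ℝ, T 0 f = f) ∧
  (∀ f : X → ℝ, ∀ t : ℝ, 0 ≤ t →
    HasDerivWithinAt (fun s => T s f) (Q (T t f)) (Set.Ici 0) t)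

/-- Ergodicity of a lower transition rate operator, expressed via its
associated time-dependent family `T`. -/
def ErgodicQ {X : Type*} [Fintype X] (T : ℝ → (X → ℝ) → (X → ℝ)) : Prop :=
  ∀ f : X → ℝ, ∃ c : ℝ, Tendsto (fun t => T t f) atTop (𝓝 (fun _ : X => c))

/-- Ergodicity of a lower transition operator. -/
def ErgodicT {X : Type*} [Fintype X] (T : (X → ℝ) → (X → ℝ)) : Prop :=
  ∀ f : X → ℝ, ∃ c : ℝ, Tendsto (fun n : ℕ => T^[n] f) atTop (𝓝 (fun _ : X => c))

/-- `x` is upper reachable from `y` (w.r.t. the lower transition rate operator `Q`). -/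
def upperReach {X : Type*} [Fintype X] (Q : (X → ℝ) → (X → ℝ)) (y x : X) : Prop :=
  ∃ (n : ℕ) (p : ℕ → X), p 0 = y ∧ p n = x ∧
    ∀ k : ℕ, k < n → p (k + 1) ≠ p k ∧ 0 < conjOp Q (ind {p (k + 1)}) (p k)

/-- One step of the lower-reachability construction: `A ↦ A ∪ {y ∉ A : Q(𝟙_A)(y) > 0}`. -/
def lowerStep {X : Type*} [Fintype X] (Q : (X → ℝ) → (X → ℝ)) (A : Set X) : Set X :=
  A ∪ {y : X | y ∉ A ∧ 0 < Q (ind A) y}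

/-- `A` is lower reachable from `x`: `x ∈ Aₙ` where `n` is the first index with
`Aₙ = Aₙ₊₁` (equivalently, any such index, since the sequence is determined by
recursion and increasing). -/
def lowerReach {X : Type*} [Fintype X] (Q : (X → ℝ) → (X → ℝ)) (x : X) (A : Set X) : Prop :=
  ∃ n : ℕ, (lowerStep Q)^[n] A = (lowerStep Q)^[n + 1] A ∧ x ∈ (lowerStep Q)^[n] A

/-- The set `𝒳_RA := {x : ∃ n ≥ 1, min T̄ⁿ 𝟙ₓ > 0}`. -/
noncomputable def XRA {X : Type*} [Fintype X] [Nonempty X]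
    (T : (X → ℝ) → (X → ℝ)) : Set X :=
  {x : X | ∃ n : ℕ, 0 < minf ((conjOp T)^[n + 1] (ind {x}))}

/-- A regularly absorbing lower transition operator. -/
def RegAbs {X : Type*} [Fintype X] [Nonempty X] (T : (X → ℝ) → (X → ℝ)) : Prop :=
  (XRA T).Nonempty ∧ ∀ x : X, x ∉ XRA T → ∃ n : ℕ, 0 < T^[n + 1] (ind (XRA T)) x

/-- The set `𝒳_1A := {x : min T̄ 𝟙ₓ > 0}`. -/
noncomputable def X1A {X : Type*} [Fintype X] [Nonempty X]
    (T : (X → ℝ) → (X → ℝ)) : Set X :=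
  {x : X | 0 < minf (conjOp T (ind {x}))}

/-- A 1-step absorbing lower transition operator. -/
def OneStepAbs {X : Type*} [Fintype X] [Nonempty X] (T : (X → ℝ) → (X → ℝ)) : Prop :=
  (X1A T).Nonempty ∧ ∀ x : X, x ∉ X1A T → 0 < T (ind (X1A T)) x

/-- The operator (sup) norm of a non-negatively homogeneous operator. -/
noncomputable def opN {X : Type*} [Fintype X] (Q : (X → ℝ) → (X → ℝ)) : ℝ :=
  sSup {r : ℝ | ∃ f : X → ℝ, ‖f‖ = 1 ∧ r = ‖Q f‖}


section Aux
set_option linter.unusedSectionVars false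

variable {X : Type*} [Fintype X] [Nonempty X] {Q : (X → ℝ) → (X → ℝ)}

lemma ltro_zero (hQ : IsLTRO Q) : Q 0 = 0 := by
  have h := hQ.1 0
  simpa [show (fun _ : X => (0:ℝ)) = 0 from rfl] using h

lemma ltro_translate (hQ : IsLTRO Q) (f : X → ℝ) (c : ℝ) :
    Q (f + fun _ => c) = Q f := by
  apply le_antisymm
  · have h := hQ.2.1 (f + fun _ => c) (fun _ => -c)
    have he : ((f + fun _ => c) + fun _ => -c) = f := by funext x; simp
    rw [he, hQ.1 (-c)] at h
    simpa using h
  · have h := hQ.2.1 f (fun _ => c)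
    rw [hQ.1 c] at h
    simpa using h

lemma ltro_sum_aux (hQ : IsLTRO Q) (g : X → ℝ) (hg : ∀ y, 0 ≤ g y) (s : Finset X) :
    (∑ y ∈ s, g y • Q (ind {y})) ≤ Q (∑ y ∈ s, g y • ind {y}) := by
  classical
  induction s using Finset.induction_on with
  | empty => simp [ltro_zero hQ]
  | @insert a s ha ih =>
      rw [Finset.sum_insert ha, Finset.sum_insert ha]
      calc g a • Q (ind {a}) + ∑ y ∈ s, g y • Q (ind {y})
          ≤ Q (g a • ind {a}) + Q (∑ y ∈ s, g y • ind {y}) := by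
            rw [hQ.2.2.1 (g a) (hg a) (ind {a})]
            exact add_le_add le_rfl ih
        _ ≤ Q (g a • ind {a} + ∑ y ∈ s, g y • ind {y}) := hQ.2.1 _ _

lemma ltro_sum (hQ : IsLTRO Q) (g : X → ℝ) (hg : ∀ y, 0 ≤ g y) (x : X) :
    ∑ y, g y * Q (ind {y}) x ≤ Q g x := by
  have h := ltro_sum_aux hQ g hg Finset.univ
  classical
  have he : (∑ y, g y • ind {y}) = g := by
    funext z
    simp only [Finset.sum_apply, Pi.smul_apply, ind, Set.indicator, smul_eq_mul]
    have : ∀ y : X, g y * (if z ∈ ({y} : Set X) then (1 : X → ℝ) z else 0)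
        = if z = y then g z else 0 := by
      intro y
      by_cases hzy : z = y <;> simp [hzy]
    simp only [Set.mem_singleton_iff, Pi.one_apply, mul_ite, mul_one, mul_zero]
    simp
  rw [he] at h
  have h' := h x
  simpa using h'

lemma ltro_diag_nonpos (hQ : IsLTRO Q) (x : X) : Q (ind {x}) x ≤ 0 := by
  have h := ltro_sum hQ (fun _ => 1) (fun _ => zero_le_one) x
  rw [hQ.1 1] at h
  simp only [one_mul, Pi.zero_apply] at h
  have hsub : ∑ y ∈ ({x} : Finset X), Q (ind {y}) x ≤ ∑ y, Q (ind {y}) x := by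
    apply Finset.sum_le_sum_of_subset_of_nonneg (Finset.subset_univ _)
    intro y _ hy
    exact hQ.2.2.2 x y (fun hxy => hy (by simp [hxy]))
  rw [Finset.sum_singleton] at hsub
  linarith

lemma ltro_low (hQ : IsLTRO Q) (f : X → ℝ) (x : X) :
    2 * ‖f‖ * Q (ind {x}) x ≤ Q f x := by
  set g : X → ℝ := f + fun _ => ‖f‖ with hgdef
  have hgnn : ∀ y, 0 ≤ g y := by
    intro y
    have := norm_le_pi_norm f y
    rw [Real.norm_eq_abs] at this
    have := abs_le.1 this
    simp only [hgdef, Pi.add_apply]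
    linarith [this.1]
  have hg2 : g x ≤ 2 * ‖f‖ := by
    have := norm_le_pi_norm f x
    rw [Real.norm_eq_abs] at this
    have := abs_le.1 this
    simp only [hgdef, Pi.add_apply]
    linarith [this.2]
  have hQg : Q g = Q f := ltro_translate hQ f ‖f‖
  have h1 := ltro_sum hQ g hgnn x
  have h2 : g x * Q (ind {x}) x ≤ ∑ y, g y * Q (ind {y}) x := by
    have := Finset.sum_le_sum_of_subset_of_nonneg (Finset.subset_univ ({x} : Finset X))
      (f := fun y => g y * Q (ind {y}) x) ?_
    · simpa using this
    · intro y _ hy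
      exact mul_nonneg (hgnn y) (hQ.2.2.2 x y (fun hxy => hy (by simp [hxy])))
  have h3 : 2 * ‖f‖ * Q (ind {x}) x ≤ g x * Q (ind {x}) x :=
    mul_le_mul_of_nonpos_right hg2 (ltro_diag_nonpos hQ x)
  calc 2 * ‖f‖ * Q (ind {x}) x ≤ g x * Q (ind {x}) x := h3
    _ ≤ ∑ y, g y * Q (ind {y}) x := h2
    _ ≤ Q g x := h1
    _ = Q f x := by rw [hQg]

lemma ltro_abs_bound (hQ : IsLTRO Q) (f : X → ℝ) (x : X) :
    |Q f x| ≤ 2 * ‖f‖ * (-(Q (ind {x}) x)) := by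
  rw [abs_le]
  constructor
  · have := ltro_low hQ f x
    linarith
  · have hlow := ltro_low hQ (-f) x
    rw [norm_neg] at hlow
    have hadd := hQ.2.1 f (-f)
    have : f + (-f) = (fun _ : X => (0:ℝ)) := by funext y; simp
    rw [this, hQ.1 0] at hadd
    have h := hadd x
    simp only [Pi.add_apply, Pi.zero_apply] at h
    linarith

lemma ltro_bound (hQ : IsLTRO Q) :
    ∃ C : ℝ, 0 < C ∧ (∀ f : X → ℝ, ‖Q f‖ ≤ C * ‖f‖) ∧
      (∀ f g : X → ℝ, ‖Q f - Q g‖ ≤ C * ‖f - g‖) := by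
  set m : X → ℝ := fun x => -(Q (ind {x}) x) with hmdef
  have hmn : ∀ x, 0 ≤ m x := fun x => neg_nonneg.2 (ltro_diag_nonpos hQ x)
  set K : ℝ := Finset.univ.sup' Finset.univ_nonempty m with hKdef
  have hK0 : 0 ≤ K := le_trans (hmn (Classical.arbitrary X))
    (Finset.le_sup' m (Finset.mem_univ _))
  refine ⟨2 * K + 1, by linarith, ?_, ?_⟩
  · intro f
    rw [pi_norm_le_iff_of_nonneg (by positivity)]
    intro x
    rw [Real.norm_eq_abs]
    calc |Q f x| ≤ 2 * ‖f‖ * m x := ltro_abs_bound hQ f x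
      _ ≤ 2 * ‖f‖ * K := by
          apply mul_le_mul_of_nonneg_left (Finset.le_sup' m (Finset.mem_univ x))
          positivity
      _ ≤ (2 * K + 1) * ‖f‖ := by nlinarith [norm_nonneg f]
  · intro f g
    have key : ∀ f g : X → ℝ, ∀ x, Q f x - Q g x ≤ (2 * K + 1) * ‖f - g‖ := by
      intro f g x
      have hadd := hQ.2.1 f (g - f)
      have : f + (g - f) = g := by funext y; simp
      rw [this] at hadd
      have h := hadd x
      simp only [Pi.add_apply] at h
      have habs : |Q (g - f) x| ≤ 2 * ‖g - f‖ * m x := ltro_abs_bound hQ (g - f) x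
      have hmK : m x ≤ K := Finset.le_sup' m (Finset.mem_univ x)
      have h2 : -(Q (g - f) x) ≤ (2 * K + 1) * ‖g - f‖ := by
        have := abs_le.1 habs
        nlinarith [norm_nonneg (g - f), this.1, hmn x]
      rw [norm_sub_rev f g]
      linarith
    rw [pi_norm_le_iff_of_nonneg]
    · intro x
      rw [Real.norm_eq_abs, abs_le]
      constructor
      · have := key g f x
        rw [norm_sub_rev] at this
        simp only [Pi.sub_apply]
        linarith
      · have := key f g x
        simpa using this
    · have := key f g (Classical.arbitrary X)
      have := key g f (Classical.arbitrary X)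
      rw [norm_sub_rev g f] at this
      linarith

end Aux

/-- `lim_{Δ→0⁺} T_Δ = I` and `lim_{Δ→0⁺} (1/Δ)(T_Δ − I) = Q`, in operator norm. -/
theorem stmt17 {X : Type*} [Fintype X] [Nonempty X]
    (Q : (X → ℝ) → (X → ℝ)) (hQ : IsLTRO Q)
    (T : ℝ → (X → ℝ) → (X → ℝ)) (hT : IsSol Q T) :
    (∀ ε : ℝ, 0 < ε → ∃ δ : ℝ, 0 < δ ∧
        ∀ Δ : ℝ, 0 < Δ → Δ < δ → ∀ f : X → ℝ, ‖f‖ = 1 → ‖T Δ f - f‖ < ε) ∧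
      (∀ ε : ℝ, 0 < ε → ∃ δ : ℝ, 0 < δ ∧
        ∀ Δ : ℝ, 0 < Δ → Δ < δ → ∀ f : X → ℝ, ‖f‖ = 1 →
          ‖Δ⁻¹ • (T Δ f - f) - Q f‖ < ε) := by
  obtain ⟨C, hC, hCb, hCl⟩ := ltro_bound hQ
  have core : ∀ Δ : ℝ, 0 < Δ → ∀ f : X → ℝ, ‖f‖ = 1 →
      (‖T Δ f - f‖ ≤ Real.exp (C * Δ) - 1) ∧
      ‖T Δ f - f - Δ • Q f‖ ≤ Δ * (C * (Real.exp (C * Δ) - 1)) := by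
    intro Δ hΔ f hf
    have hderiv := hT.2 f
    have hT0 := hT.1 f
    have hgb : ∀ t : ℝ, gronwallBound 0 C C t = Real.exp (C * t) - 1 := by
      intro t
      rw [gronwallBound_of_K_ne_0 hC.ne']
      field_simp
      ring
    have hcont : ContinuousOn (fun s => T s f) (Set.Icc 0 Δ) := fun t ht =>
      ((hderiv t ht.1).continuousWithinAt).mono Set.Icc_subset_Ici_self
    have claim1 : ∀ t ∈ Set.Icc (0:ℝ) Δ,
        ‖T t f - f‖ ≤ gronwallBound 0 C C (t - 0) := by
      apply norm_le_gronwallBound_of_norm_deriv_right_le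
        (f := fun s => T s f - f) (f' := fun s => Q (T s f))
      · exact hcont.sub continuousOn_const
      · intro t ht
        exact ((hderiv t ht.1).sub_const f).mono (Set.Ici_subset_Ici.2 ht.1)
      · simp [hT0]
      · intro t ht
        calc ‖Q (T t f)‖ ≤ C * ‖T t f‖ := hCb _
          _ ≤ C * (‖T t f - f‖ + ‖f‖) := by
              apply mul_le_mul_of_nonneg_left _ hC.le
              calc ‖T t f‖ = ‖(T t f - f) + f‖ := by rw [sub_add_cancel]
                _ ≤ ‖T t f - f‖ + ‖f‖ := norm_add_le _ _
          _ = C * ‖T t f - f‖ + C := by rw [hf]; ring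
    have claim1' : ∀ t ∈ Set.Icc (0:ℝ) Δ, ‖T t f - f‖ ≤ Real.exp (C * t) - 1 := by
      intro t ht
      have := claim1 t ht
      rwa [sub_zero, hgb] at this
    refine ⟨claim1' Δ ⟨hΔ.le, le_rfl⟩, ?_⟩
    have claim2 : ∀ t ∈ Set.Icc (0:ℝ) Δ,
        ‖T t f - f - t • Q f‖ ≤ gronwallBound 0 0 (C * (Real.exp (C * Δ) - 1)) (t - 0) := by
      apply norm_le_gronwallBound_of_norm_deriv_right_le
        (f := fun s => T s f - f - s • Q f) (f' := fun s => Q (T s f) - Q f)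
      · exact (hcont.sub continuousOn_const).sub
          ((continuous_id.smul continuous_const).continuousOn)
      · intro t ht
        have h1 : HasDerivWithinAt (fun s => T s f - f) (Q (T t f)) (Set.Ici t) t :=
          ((hderiv t ht.1).sub_const f).mono (Set.Ici_subset_Ici.2 ht.1)
        have h2 : HasDerivWithinAt (fun s : ℝ => s • Q f) (Q f) (Set.Ici t) t := by
          have := (hasDerivAt_id t).smul_const (Q f)
          simpa using this.hasDerivWithinAt
        exact h1.sub h2
      · simp [hT0]
      · intro t ht
        rw [zero_mul, zero_add]
        calc ‖Q (T t f) - Q f‖ ≤ C * ‖T t f - f‖ := hCl _ _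
          _ ≤ C * (Real.exp (C * t) - 1) := by
              exact mul_le_mul_of_nonneg_left (claim1' t ⟨ht.1, ht.2.le⟩) hC.le
          _ ≤ C * (Real.exp (C * Δ) - 1) := by
              apply mul_le_mul_of_nonneg_left _ hC.le
              have : C * t ≤ C * Δ := mul_le_mul_of_nonneg_left ht.2.le hC.le
              linarith [Real.exp_le_exp.2 this]
    have := claim2 Δ ⟨hΔ.le, le_rfl⟩
    rw [sub_zero, gronwallBound_K0] at this
    simpa [mul_comm] using this
  constructor
  · intro ε hε
    refine ⟨C⁻¹ * Real.log (1 + ε), mul_pos (inv_pos.2 hC) (Real.log_pos (by linarith)), ?_⟩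
    intro Δ hΔ hΔδ f hf
    have h1 := (core Δ hΔ f hf).1
    have h2 : C * Δ < Real.log (1 + ε) := by
      have := (mul_lt_mul_iff_right₀ hC).2 hΔδ
      rwa [← mul_assoc, mul_inv_cancel₀ hC.ne', one_mul] at this
    have h3 : Real.exp (C * Δ) < 1 + ε := by
      calc Real.exp (C * Δ) < Real.exp (Real.log (1 + ε)) := Real.exp_lt_exp.2 h2
        _ = 1 + ε := Real.exp_log (by linarith)
    linarith
  · intro ε hε
    have hεC : 0 < ε / C := div_pos hε hC
    refine ⟨C⁻¹ * Real.log (1 + ε / C), mul_pos (inv_pos.2 hC) (Real.log_pos (by linarith)), ?_⟩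
    intro Δ hΔ hΔδ f hf
    have h1 := (core Δ hΔ f hf).2
    have h2 : C * Δ < Real.log (1 + ε / C) := by
      have := (mul_lt_mul_iff_right₀ hC).2 hΔδ
      rwa [← mul_assoc, mul_inv_cancel₀ hC.ne', one_mul] at this
    have h3 : Real.exp (C * Δ) < 1 + ε / C := by
      calc Real.exp (C * Δ) < Real.exp (Real.log (1 + ε / C)) := Real.exp_lt_exp.2 h2
        _ = 1 + ε / C := Real.exp_log (by linarith)
    have heq : Δ⁻¹ • (T Δ f - f) - Q f = Δ⁻¹ • (T Δ f - f - Δ • Q f) := by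
      simp [smul_sub, smul_smul, inv_mul_cancel₀ hΔ.ne']
    rw [heq, norm_smul, Real.norm_eq_abs, abs_of_pos (inv_pos.2 hΔ)]
    calc Δ⁻¹ * ‖T Δ f - f - Δ • Q f‖ ≤ Δ⁻¹ * (Δ * (C * (Real.exp (C * Δ) - 1))) := by
          exact mul_le_mul_of_nonneg_left h1 (inv_pos.2 hΔ).le
      _ = C * (Real.exp (C * Δ) - 1) := by field_simp
      _ < C * (ε / C) := by
          apply (mul_lt_mul_iff_right₀ hC).2
          linarith
      _ = ε := by field_simp
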